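/- arXiv:0905.2674 — 4 statements merged into one kernel-verified Lean document; each statement's English description precedes it below -/
import Mathlib

section
/- Let G be a finite group that contains a normal subgroup A such that C_G(A) ≤ A and such that [A, x] is a normal subset of A for every small element x of G. Then M(G) is nilpotent of nilpotency class at most 3. -/
/-- The size of the conjugacy class of `x` in `G`. -/
noncomputable def classCard {G : Type*} [Group G] (x : G) : ℕ := Nat.card (conjugatesOf x)

/-- An element `x` is *small* if its conjugacy class size is among the two smallest
conjugacy class sizes of `G`, i.e. at most one conjugacy class size is strictly
smaller than that of `x`. -/
def IsSmall {G : Type*} [Group G] (x : G) : Prop :=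
  {n : ℕ | (∃ g : G, classCard g = n) ∧ n < classCard x}.Subsingleton

/-- `M G` is the subgroup generated by all small elements of `G`. -/
def smallGen (G : Type*) [Group G] : Subgroup G := Subgroup.closure {x : G | IsSmall x}

/-- `[x, K] = {x⁻¹k⁻¹xk : k ∈ K}`. -/
def commSet {G : Type*} [Group G] (x : G) (K : Set G) : Set G :=
  {y | ∃ k ∈ K, y = x⁻¹ * k⁻¹ * x * k}

/-- `[A, x] = {a⁻¹x⁻¹ax : a ∈ A}`. -/
def commSet' {G : Type*} [Group G] (A : Set G) (x : G) : Set G :=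
  {y | ∃ a ∈ A, y = a⁻¹ * x⁻¹ * a * x}

/-- `S` is a normal subset of `K`: `k⁻¹Sk = S` for all `k ∈ K`. -/
def IsNormalSubsetOf {G : Type*} [Group G] (S K : Set G) : Prop :=
  ∀ k ∈ K, (fun s => k⁻¹ * s * k) '' S = S

/-- The Fitting subgroup: the join of all nilpotent normal subgroups (for a finite
group, its largest nilpotent normal subgroup). -/
def fittingSubgroup (G : Type*) [Group G] : Subgroup G :=
  ⨆ H ∈ {H : Subgroup G | H.Normal ∧ Group.IsNilpotent ↥H}, H



open MulAction Subgroup Pointwise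
open scoped commutatorElement

theorem conj_orbit_stab {G : Type*} [Group G] [Finite G] (H : Subgroup G) (t : G) :
    Nat.card {g : G | ∃ h ∈ (H : Set G), g = h⁻¹ * t * h} *
      Nat.card ↥(Subgroup.centralizer {t} ⊓ H) = Nat.card ↥H := by
  classical
  set H' : Subgroup (ConjAct G) := H.map ConjAct.toConjAct.toMonoidHom with hH'
  have hcard : Nat.card ↥(orbit ↥H' t) * Nat.card ↥(stabilizer ↥H' t) = Nat.card ↥H' := by
    have := Nat.card_congr (MulAction.orbitProdStabilizerEquivGroup ↥H' t)
    rwa [Nat.card_prod] at this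
  have hsmul : ∀ (u : ConjAct G) (hu : u ∈ H'), (⟨u, hu⟩ : ↥H') • t
      = ConjAct.ofConjAct u * t * (ConjAct.ofConjAct u)⁻¹ := by
    intro u hu
    rw [Subgroup.smul_def, ConjAct.smul_def]
  have horb : (orbit ↥H' t : Set G) = {g : G | ∃ h ∈ (H : Set G), g = h⁻¹ * t * h} := by
    ext g
    constructor
    · rintro ⟨⟨u, hu⟩, rfl⟩
      rcases hu with ⟨h, hh, rfl⟩
      refine ⟨h⁻¹, inv_mem hh, ?_⟩
      show (⟨_, _⟩ : ↥H') • t = _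
      refine (hsmul _ _).trans ?_
      simp only [MulEquiv.coe_toMonoidHom, ConjAct.ofConjAct_toConjAct]
      group
    · rintro ⟨h, hh, rfl⟩
      refine ⟨⟨ConjAct.toConjAct h⁻¹, ⟨h⁻¹, inv_mem hh, rfl⟩⟩, ?_⟩
      show (⟨_, _⟩ : ↥H') • t = _
      refine (hsmul _ _).trans ?_
      rw [ConjAct.ofConjAct_toConjAct]
      group
  have hstab : Nat.card ↥(stabilizer ↥H' t) = Nat.card ↥(Subgroup.centralizer {t} ⊓ H) := by
    refine Nat.card_congr ?_
    refine ⟨fun u => ⟨ConjAct.ofConjAct (↑↑u : ConjAct G), Subgroup.mem_inf.mpr ⟨?_, ?_⟩⟩,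
      fun v => ⟨⟨ConjAct.toConjAct (v : G), ⟨v, v.2.2, rfl⟩⟩, ?_⟩, ?_, ?_⟩
    · rcases u with ⟨⟨u, hu⟩, hst⟩
      have h1 : (⟨u, hu⟩ : ↥H') • t = t := hst
      rw [hsmul] at h1
      rw [Subgroup.mem_centralizer_iff]
      rintro h rfl
      exact (mul_inv_eq_iff_eq_mul.mp h1).symm
    · rcases u with ⟨⟨u, hu⟩, hst⟩
      rcases hu with ⟨h, hh, rfl⟩
      simpa using hh
    · show (⟨_, _⟩ : ↥H') • t = t
      refine (hsmul _ _).trans ?_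
      rw [ConjAct.ofConjAct_toConjAct]
      have h2 : t * (v : G) = (v : G) * t :=
        Subgroup.mem_centralizer_iff.mp (Subgroup.mem_inf.mp v.2).1 t rfl
      rw [← h2]; group
    · intro u
      ext
      simp
    · intro v
      ext
      simp
  have hHH : Nat.card ↥H' = Nat.card ↥H :=
    Nat.card_congr (H.equivMapOfInjective ConjAct.toConjAct.toMonoidHom
      (by simpa using ConjAct.toConjAct.injective)).toEquiv.symm
  rw [horb, hstab, hHH] at hcard
  exact hcard


theorem classCard_mul_card_centralizer {G : Type*} [Group G] [Finite G] (t : G) :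
    classCard t * Nat.card ↥(Subgroup.centralizer {t}) = Nat.card G := by
  have h := conj_orbit_stab (⊤ : Subgroup G) t
  have hset : {g : G | ∃ h ∈ ((⊤ : Subgroup G) : Set G), g = h⁻¹ * t * h} = conjugatesOf t := by
    ext g
    constructor
    · rintro ⟨h, -, rfl⟩
      exact isConj_iff.mpr ⟨h⁻¹, by group⟩
    · intro hg
      rcases isConj_iff.mp hg with ⟨c, rfl⟩
      exact ⟨c⁻¹, trivial, by group⟩
  rw [hset, inf_top_eq, Subgroup.card_top] at h
  exact h

theorem classCard_one {G : Type*} [Group G] : classCard (1 : G) = 1 := by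
  have : conjugatesOf (1 : G) = {1} := by
    ext g
    simp [conjugatesOf, isConj_comm, isConj_one_right]
  rw [classCard, this]
  simp

theorem classCard_eq_one_iff {G : Type*} [Group G] [Finite G] (x : G) :
    classCard x = 1 ↔ x ∈ Subgroup.center G := by
  constructor
  · intro h
    rw [Subgroup.mem_center_iff]
    intro g
    have hx : x ∈ conjugatesOf x := mem_conjugatesOf_self
    have hgx : g * x * g⁻¹ ∈ conjugatesOf x := isConj_iff.mpr ⟨g, rfl⟩
    have : conjugatesOf x = {x} := by
      have hfin : (conjugatesOf x).Finite := Set.toFinite _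
      have := Set.ncard_eq_one.mp (by rw [← Nat.card_coe_set_eq] at *; exact h)
      rcases this with ⟨a, ha⟩
      rw [ha] at hx
      rw [ha, Set.mem_singleton_iff.mp hx]
    rw [this] at hgx
    exact mul_inv_eq_iff_eq_mul.mp hgx
  · intro h
    have : conjugatesOf x = {x} := by
      ext g
      constructor
      · intro hg
        rcases isConj_iff.mp hg with ⟨c, rfl⟩
        have hcx := Subgroup.mem_center_iff.mp h c
        rw [Set.mem_singleton_iff, hcx]
        group
      · rintro rfl
        exact mem_conjugatesOf_self
    rw [classCard, this]
    simp


theorem claimA {G : Type*} [Group G] [Finite G] (A : Subgroup G) (hA : A.Normal)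
    (x : G) (hx : IsSmall x) (hnsx : IsNormalSubsetOf (commSet' (A : Set G) x) (A : Set G)) :
    ∀ t ∈ commSet' (A : Set G) x, t ∈ Subgroup.center G := by
  classical
  intro t ht
  by_cases hxc : x ∈ Subgroup.center G
  · obtain ⟨a, ha, rfl⟩ := ht
    have hcom : Commute a x := Subgroup.mem_center_iff.mp hxc a
    have h2 : x⁻¹ * a = a * x⁻¹ := (hcom.inv_right.eq).symm
    have h3 : a⁻¹ * x⁻¹ * a * x = 1 := by
      calc a⁻¹ * x⁻¹ * a * x = a⁻¹ * (x⁻¹ * a) * x := by group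
        _ = a⁻¹ * (a * x⁻¹) * x := by rw [h2]
        _ = 1 := by group
    rw [h3]; exact (Subgroup.center G).one_mem
  · -- main case
    by_contra htc
    set S := commSet' (A : Set G) x with hSdef
    set m := classCard x with hmdef
    -- minimality facts
    have hm1 : 1 < m := by
      have hne : m ≠ 1 := fun h => hxc ((classCard_eq_one_iff x).mp h)
      have hpos : 0 < m := by
        have : Nonempty ↥(conjugatesOf x) := ⟨⟨x, mem_conjugatesOf_self⟩⟩
        exact Nat.card_pos
      omega
    have hmin : ∀ g : G, g ∉ Subgroup.center G → m ≤ classCard g := by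
      intro g hg
      by_contra hlt
      push_neg at hlt
      have h1m : (1:ℕ) ∈ {n : ℕ | (∃ g : G, classCard g = n) ∧ n < classCard x} :=
        ⟨⟨1, classCard_one⟩, hm1⟩
      have hgm : classCard g ∈ {n : ℕ | (∃ g : G, classCard g = n) ∧ n < classCard x} :=
        ⟨⟨g, rfl⟩, hlt⟩
      exact hg ((classCard_eq_one_iff g).mp (hx hgm h1m))
    -- S facts
    have hSA : S ⊆ (A : Set G) := by
      rintro s ⟨a, ha, rfl⟩
      have h1 : x⁻¹ * a * x ∈ A := by
        have := hA.conj_mem a ha x⁻¹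
        rwa [inv_inv] at this
      have : a⁻¹ * x⁻¹ * a * x = a⁻¹ * (x⁻¹ * a * x) := by group
      rw [this]
      exact mul_mem (inv_mem ha) h1
    have hconj : ∀ k, k ∈ A → ∀ s ∈ S, k⁻¹ * s * k ∈ S := by
      intro k hk s hs
      rw [← hnsx k hk]
      exact ⟨s, hs, rfl⟩
    have h1S : (1:G) ∈ S := ⟨1, A.one_mem, by group⟩
    have hmulS : ∀ s ∈ S, ∀ u ∈ S, s * u ∈ S := by
      rintro s hs u ⟨b, hb, rfl⟩
      have hs' : b * s * b⁻¹ ∈ S := by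
        have := hconj b⁻¹ (inv_mem hb) s hs
        rwa [inv_inv] at this
      rcases hs' with ⟨a', ha', he⟩
      refine ⟨a' * b, mul_mem ha' hb, ?_⟩
      have hsval : s = b⁻¹ * (a'⁻¹ * x⁻¹ * a' * x) * b := by rw [← he]; group
      rw [hsval]; group
    have hinvS : ∀ s ∈ S, s⁻¹ ∈ S := by
      rintro s ⟨a, ha, rfl⟩
      have h0 : a * x⁻¹ * a⁻¹ * x ∈ S := ⟨a⁻¹, inv_mem ha, by group⟩
      have h1 := hconj a ha _ h0
      have h2 : (a⁻¹ * x⁻¹ * a * x)⁻¹ = a⁻¹ * (a * x⁻¹ * a⁻¹ * x) * a := by group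
      rw [h2]; exact h1
    set T : Subgroup G :=
      { carrier := S
        mul_mem' := fun {s} {u} hs hu => hmulS s hs u hu
        one_mem' := h1S
        inv_mem' := fun {s} hs => hinvS s hs } with hTdef
    set C := Subgroup.centralizer ({x} : Set G) with hCdef
    set N := A ⊔ C with hNdef
    have hCconj : ∀ c ∈ C, ∀ s ∈ S, c⁻¹ * s * c ∈ S := by
      rintro c hc s ⟨a, ha, rfl⟩
      have hxc2 : x * c = c * x := Subgroup.mem_centralizer_iff.mp hc x rfl
      refine ⟨c⁻¹ * a * c, ?_, ?_⟩
      · have := hA.conj_mem a ha c⁻¹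
        rwa [inv_inv] at this
      · have hu : c⁻¹ * x * c = x := by rw [mul_assoc, hxc2]; group
        calc c⁻¹ * (a⁻¹ * x⁻¹ * a * x) * c
            = (c⁻¹*a*c)⁻¹ * (c⁻¹*x*c)⁻¹ * (c⁻¹*a*c) * (c⁻¹*x*c) := by group
          _ = (c⁻¹*a*c)⁻¹ * x⁻¹ * (c⁻¹*a*c) * x := by rw [hu]
    have hAle : A ≤ Subgroup.normalizer (T : Set G) := by
      intro a ha
      rw [Subgroup.mem_normalizer_iff]
      intro h
      constructor
      · intro hh
        have := hconj a⁻¹ (inv_mem ha) h hh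
        rwa [inv_inv] at this
      · intro hh
        have := hconj a ha _ hh
        have h2 : a⁻¹ * (a * h * a⁻¹) * a = h := by group
        rwa [h2] at this
    have hCle : C ≤ Subgroup.normalizer (T : Set G) := by
      intro c hc
      rw [Subgroup.mem_normalizer_iff]
      intro h
      constructor
      · intro hh
        have hc' : c⁻¹ ∈ C := inv_mem hc
        have := hCconj c⁻¹ hc' h hh
        rwa [inv_inv] at this
      · intro hh
        have := hCconj c hc _ hh
        have h2 : c⁻¹ * (c * h * c⁻¹) * c = h := by group
        rwa [h2] at this
    have hNle : N ≤ Subgroup.normalizer (T : Set G) := sup_le hAle hCle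
    have hN : ∀ n ∈ N, ∀ s ∈ S, n⁻¹ * s * n ∈ S := by
      intro n hn s hs
      have h1 := (Subgroup.mem_normalizer_iff.mp (hNle hn) (n⁻¹ * s * n)).mpr
      have h2 : n * (n⁻¹ * s * n) * n⁻¹ = s := by group
      exact h1 (by rw [h2]; exact hs)
    -- orbit of x under N is x * S
    have horbN : {g : G | ∃ n ∈ (N : Set G), g = n⁻¹ * x * n} = (fun s => x * s) '' S := by
      ext g
      constructor
      · rintro ⟨n, hn, rfl⟩
        have hn' : n ∈ ((A : Set G) * (C : Set G)) := by
          rw [← Subgroup.normal_mul]; exact hn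
        rcases hn' with ⟨a, ha, c, hc, rfl⟩
        have hs0 : x⁻¹ * a⁻¹ * x * a ∈ S := by
          have := hinvS _ ⟨a, ha, rfl⟩
          have h2 : (a⁻¹ * x⁻¹ * a * x)⁻¹ = x⁻¹ * a⁻¹ * x * a := by group
          rwa [h2] at this
        have hs1 := hCconj c hc _ hs0
        refine ⟨c⁻¹ * (x⁻¹ * a⁻¹ * x * a) * c, hs1, ?_⟩
        have hxc2 : x * c = c * x := Subgroup.mem_centralizer_iff.mp hc x rfl
        have hcom : Commute x c := hxc2
        have hcx1 : x * c⁻¹ = c⁻¹ * x := hcom.inv_right.eq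
        show x * (c⁻¹ * (x⁻¹ * a⁻¹ * x * a) * c) = (a * c)⁻¹ * x * (a * c)
        calc x * (c⁻¹ * (x⁻¹ * a⁻¹ * x * a) * c)
            = (x * c⁻¹) * (x⁻¹ * a⁻¹ * x * a) * c := by group
          _ = (c⁻¹ * x) * (x⁻¹ * a⁻¹ * x * a) * c := by rw [hcx1]
          _ = (a * c)⁻¹ * x * (a * c) := by group
      · rintro ⟨s, hs, rfl⟩
        rcases hinvS s hs with ⟨a, ha, he⟩
        have hs2 : x * s = a⁻¹ * x * a := by
          have h3 : s = (a⁻¹ * x⁻¹ * a * x)⁻¹ := by rw [← he]; group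
          rw [h3]; group
        exact ⟨a, (le_sup_left : A ≤ N) ha, hs2⟩
    -- counting
    have hc1 : Nat.card {g : G | ∃ n ∈ (N : Set G), g = n⁻¹ * x * n} = Nat.card S := by
      rw [horbN]
      exact Nat.card_image_of_injective (mul_right_injective x) _
    have hCN : Subgroup.centralizer ({x} : Set G) ⊓ N = C := inf_eq_left.mpr le_sup_right
    have E1 := conj_orbit_stab N x
    rw [hc1, hCN] at E1
    have E2 := classCard_mul_card_centralizer x
    have E3 := Subgroup.index_mul_card (H := N)
    have hCpos : 0 < Nat.card ↥C := Nat.card_pos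
    have hm : m = N.index * Nat.card S := by
      have h4 : m * Nat.card ↥C = (N.index * Nat.card S) * Nat.card ↥C := by
        rw [E2, ← E3, ← E1]; ring
      exact Nat.eq_of_mul_eq_mul_right hCpos h4
    -- the orbit of t
    have htS : t ∈ S := ht
    have htne : t ≠ 1 := fun h => htc (h ▸ (Subgroup.center G).one_mem)
    set O := {g : G | ∃ n ∈ (N : Set G), g = n⁻¹ * t * n} with hOdef
    have hOsub : O ⊆ S := by
      rintro g ⟨n, hn, rfl⟩
      exact hN n hn t htS
    have h1O : (1:G) ∉ O := by
      rintro ⟨n, hn, he⟩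
      apply htne
      have : n * (1:G) * n⁻¹ = t := by rw [he]; group
      rw [← this]; group
    have hss : O ⊂ S := (Set.ssubset_iff_of_subset hOsub).mpr ⟨1, h1S, h1O⟩
    have hcard_lt : Nat.card O < Nat.card S := by
      rw [Nat.card_coe_set_eq, Nat.card_coe_set_eq]
      exact Set.ncard_lt_ncard hss (Set.toFinite S)
    have E4 := conj_orbit_stab N t
    have E5 := classCard_mul_card_centralizer t
    have hCtpos : 0 < Nat.card ↥(Subgroup.centralizer ({t} : Set G)) := Nat.card_pos
    have hle : Nat.card ↥(Subgroup.centralizer ({t} : Set G) ⊓ N)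
        ≤ Nat.card ↥(Subgroup.centralizer ({t} : Set G)) :=
      Subgroup.card_le_of_le inf_le_left
    have step1 : classCard t * Nat.card ↥(Subgroup.centralizer ({t} : Set G))
        ≤ (N.index * Nat.card O) * Nat.card ↥(Subgroup.centralizer ({t} : Set G)) := by
      calc classCard t * Nat.card ↥(Subgroup.centralizer ({t} : Set G))
          = N.index * (Nat.card O * Nat.card ↥(Subgroup.centralizer ({t} : Set G) ⊓ N)) := by
            rw [E5, ← E3, ← E4]
        _ ≤ N.index * (Nat.card O * Nat.card ↥(Subgroup.centralizer ({t} : Set G))) := by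
            exact Nat.mul_le_mul_left _ (Nat.mul_le_mul_left _ hle)
        _ = (N.index * Nat.card O) * Nat.card ↥(Subgroup.centralizer ({t} : Set G)) := by ring
    have step2 : classCard t ≤ N.index * Nat.card O :=
      Nat.le_of_mul_le_mul_right step1 hCtpos
    have hkpos : 0 < N.index := Nat.pos_of_ne_zero (Subgroup.index_ne_zero_of_finite)
    have step3 : N.index * Nat.card O < N.index * Nat.card S :=
      mul_lt_mul_of_pos_left hcard_lt hkpos
    have hfinal : classCard t < m := by
      rw [hm]
      exact lt_of_le_of_lt step2 step3
    exact absurd hfinal (not_lt.mpr (hmin t htc))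

theorem central_conj {G : Type*} [Group G] {z : G} (hz : z ∈ Subgroup.center G) (u : G) :
    u⁻¹ * z * u = z := by
  have h := Subgroup.mem_center_iff.mp hz u
  rw [mul_assoc, ← h, ← mul_assoc]
  group

theorem claimC {G : Type*} [Group G] (A : Subgroup G) {g h : G}
    (hg : ∀ a ∈ A, a⁻¹ * g⁻¹ * a * g ∈ Subgroup.center G)
    (hh : ∀ a ∈ A, a⁻¹ * h⁻¹ * a * h ∈ Subgroup.center G)
    {a : G} (ha : a ∈ A) : a * ⁅g, h⁆ = ⁅g, h⁆ * a := by
  have hz₁ := hg a ha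
  have hz₂ := hh a ha
  have c₁ : h⁻¹ * (a⁻¹ * g⁻¹ * a * g) * h = a⁻¹ * g⁻¹ * a * g := central_conj hz₁ h
  have c₂ : g⁻¹ * (a⁻¹ * h⁻¹ * a * h) * g = a⁻¹ * h⁻¹ * a * h := central_conj hz₂ g
  have c₃ : (a⁻¹ * h⁻¹ * a * h) * (a⁻¹ * g⁻¹ * a * g)
      = (a⁻¹ * g⁻¹ * a * g) * (a⁻¹ * h⁻¹ * a * h) :=
    Subgroup.mem_center_iff.mp hz₁ _
  have key : (g * h)⁻¹ * a * (g * h) = (h * g)⁻¹ * a * (h * g) := by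
    calc (g * h)⁻¹ * a * (g * h)
        = (h⁻¹ * a * h) * (h⁻¹ * (a⁻¹ * g⁻¹ * a * g) * h) := by group
      _ = (h⁻¹ * a * h) * (a⁻¹ * g⁻¹ * a * g) := by rw [c₁]
      _ = a * ((a⁻¹ * h⁻¹ * a * h) * (a⁻¹ * g⁻¹ * a * g)) := by group
      _ = a * ((a⁻¹ * g⁻¹ * a * g) * (a⁻¹ * h⁻¹ * a * h)) := by rw [c₃]
      _ = (g⁻¹ * a * g) * (a⁻¹ * h⁻¹ * a * h) := by group
      _ = (g⁻¹ * a * g) * (g⁻¹ * (a⁻¹ * h⁻¹ * a * h) * g) := by rw [c₂]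
      _ = (h * g)⁻¹ * a * (h * g) := by group
  rw [commutatorElement_def]
  calc a * (g * h * g⁻¹ * h⁻¹)
      = (g * h) * ((g * h)⁻¹ * a * (g * h)) * (h * g)⁻¹ := by group
    _ = (g * h) * ((h * g)⁻¹ * a * (h * g)) * (h * g)⁻¹ := by rw [key]
    _ = (g * h * g⁻¹ * h⁻¹) * a := by group


/-- If a finite group `G` has a normal subgroup `A` with `C_G(A) ≤ A` such that `[A, x]`
is a normal subset of `A` for every small element `x` of `G`, then `M(G)` is nilpotent
of class at most `3`. -/
theorem stmt_0 {G : Type*} [Group G] [Finite G] (A : Subgroup G) (hA : A.Normal)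
    (hC : Subgroup.centralizer (A : Set G) ≤ A)
    (hns : ∀ x : G, IsSmall x → IsNormalSubsetOf (commSet' (A : Set G) x) (A : Set G)) :
    Group.IsNilpotent ↥(smallGen G) ∧ (⊤ : Subgroup ↥(smallGen G)).lowerCentralSeries 3 = ⊥ := by
  classical
  set Z := Subgroup.center G with hZdef
  have hKA : ∀ g : G, IsSmall g → ∀ a ∈ A, a⁻¹ * g⁻¹ * a * g ∈ Z := by
    intro g hg a ha
    exact claimA A hA g hg (hns g hg) _ ⟨a, ha, rfl⟩
  set K : Subgroup G :=
    { carrier := {g : G | ∀ a ∈ A, a⁻¹ * g⁻¹ * a * g ∈ Z}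
      one_mem' := by
        intro a ha
        have h1 : a⁻¹ * (1:G)⁻¹ * a * 1 = 1 := by group
        rw [h1]; exact Z.one_mem
      mul_mem' := by
        intro g h hg hh a ha
        have hz1 := hg a ha
        have hz2 := hh a ha
        have hid : a⁻¹ * (g*h)⁻¹ * a * (g*h)
            = (a⁻¹ * h⁻¹ * a * h) * (h⁻¹ * (a⁻¹ * g⁻¹ * a * g) * h) := by group
        rw [hid, central_conj hz1 h]
        exact Z.mul_mem hz2 hz1
      inv_mem' := by
        intro g hg a ha
        have hz := hg (g * a * g⁻¹) (hA.conj_mem a ha g)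
        have hid : a⁻¹ * g⁻¹⁻¹ * a * g⁻¹
            = ((g*a*g⁻¹)⁻¹ * g⁻¹ * (g*a*g⁻¹) * g)⁻¹ := by group
        rw [hid]
        exact Z.inv_mem hz } with hKdef
  have hmemK : ∀ g : G, g ∈ K ↔ ∀ a ∈ A, a⁻¹ * g⁻¹ * a * g ∈ Z := fun g => Iff.rfl
  have hMK : smallGen G ≤ K := by
    rw [smallGen, Subgroup.closure_le]
    intro g hg
    exact (hmemK g).mpr (hKA g hg)
  set M := smallGen G with hMdef
  -- step: lcs 1 ≤ centralizer A pulled back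
  have lcs1 : (⊤ : Subgroup ↥M).lowerCentralSeries 1 ≤ (Subgroup.centralizer (A : Set G)).comap M.subtype := by
    rw [show (1:ℕ) = 0 + 1 from rfl, Subgroup.lowerCentralSeries_succ]
    refine (Subgroup.closure_le _).mpr ?_
    rintro x ⟨g, hg, h, -, rfl⟩
    rw [SetLike.mem_coe]
    rw [Subgroup.mem_comap]
    rw [Subgroup.mem_centralizer_iff]
    intro a ha
    have hgK := (hmemK _).mp (hMK g.2)
    have hhK := (hmemK _).mp (hMK h.2)
    show a * ↑(g * h * g⁻¹ * h⁻¹) = ↑(g * h * g⁻¹ * h⁻¹) * a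
    have hcoe : (↑(g * h * g⁻¹ * h⁻¹) : G) = ⁅(g:G), (h:G)⁆ := rfl
    rw [hcoe]
    exact claimC A hgK hhK ha
  have lcs2 : (⊤ : Subgroup ↥M).lowerCentralSeries 2 ≤ Z.comap M.subtype := by
    rw [show (2:ℕ) = 1 + 1 from rfl, Subgroup.lowerCentralSeries_succ]
    refine (Subgroup.closure_le _).mpr ?_
    rintro x ⟨g, hg, h, -, rfl⟩
    rw [SetLike.mem_coe]
    rw [Subgroup.mem_comap]
    have hgA : (g : G) ∈ A := hC (Subgroup.mem_comap.mp (lcs1 hg))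
    have hhK := (hmemK _).mp (hMK h.2)
    obtain ⟨u, hu⟩ : ∃ u : G, u = (g:G) := ⟨(g:G), rfl⟩
    obtain ⟨v, hv⟩ : ∃ v : G, v = (h:G) := ⟨(h:G), rfl⟩
    have hw : u⁻¹ * v⁻¹ * u * v ∈ Z := by rw [hu, hv]; exact hhK _ hgA
    show ↑(g * h * g⁻¹ * h⁻¹) ∈ Z
    have hcoe : (↑(g * h * g⁻¹ * h⁻¹) : G) = u * v * u⁻¹ * v⁻¹ := by rw [hu, hv]; rfl
    rw [hcoe]
    have hid : u * v * u⁻¹ * v⁻¹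
        = (((u*v)⁻¹)⁻¹ * (u⁻¹ * v⁻¹ * u * v)⁻¹ * (u*v)⁻¹)⁻¹ := by group
    rw [hid, central_conj (Z.inv_mem hw) ((u*v)⁻¹)]
    exact Z.inv_mem (Z.inv_mem hw)
  have lcs3 : (⊤ : Subgroup ↥M).lowerCentralSeries 3 = ⊥ := by
    rw [eq_bot_iff]
    rw [show (3:ℕ) = 2 + 1 from rfl, Subgroup.lowerCentralSeries_succ]
    refine (Subgroup.closure_le _).mpr ?_
    rintro x ⟨g, hg, h, -, rfl⟩
    rw [SetLike.mem_coe]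
    have hgZ : (g : G) ∈ Z := Subgroup.mem_comap.mp (lcs2 hg)
    rw [Subgroup.mem_bot]
    have : (↑(g * h * g⁻¹ * h⁻¹) : G) = 1 := by
      have hcoe : (↑(g * h * g⁻¹ * h⁻¹) : G) = ⁅(g:G), (h:G)⁆ := rfl
      rw [hcoe]
      exact commutatorElement_eq_one_iff_commute.mpr
        (Subgroup.mem_center_iff.mp hgZ (h:G)).symm
    exact Subtype.ext this
  constructor
  · exact Subgroup.nilpotent_iff_lowerCentralSeries.mpr ⟨3, lcs3⟩
  · exact lcs3
end

section
/- Let G be a finite group, let K be a normal subgroup of G, and let x ∈ G be an element not lying in the center Z(G) such that [x, K] is a normal subset of K. Then for every y ∈ [x, K], the centralizer orders satisfy |C_G(y)| > |C_G(x)|. -/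
open scoped Pointwise in
lemma sup_decomp {G : Type*} [Group G] (K C : Subgroup G) [K.Normal] {g : G}
    (hg : g ∈ K ⊔ C) : ∃ k ∈ K, ∃ c ∈ C, g = k * c := by
  have h : g ∈ ((K : Set G) * (C : Set G)) := by
    rw [← Subgroup.normal_mul K C]; exact hg
  obtain ⟨k, hk, c, hc, hkc⟩ := h
  exact ⟨k, hk, c, hc, hkc.symm⟩

/-- Let `K` be a normal subgroup of a finite group `G` and `x ∉ Z(G)` with `[x, K]` a
normal subset of `K`. Then `|C_G(y)| > |C_G(x)|` for every `y ∈ [x, K]`. -/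
theorem stmt_5 {G : Type*} [Group G] [Finite G] (K : Subgroup G) (hK : K.Normal)
    (x : G) (hx : x ∉ Subgroup.center G)
    (hns : IsNormalSubsetOf (commSet x (K : Set G)) (K : Set G)) :
    ∀ y ∈ commSet x (K : Set G),
      Nat.card ↥(Subgroup.centralizer {y}) > Nat.card ↥(Subgroup.centralizer {x}) := by
  classical
  intro y hy
  set C : Subgroup G := Subgroup.centralizer {x} with hCdef
  by_cases hy1 : y = 1
  · subst hy1
    have h1 : Subgroup.centralizer ({(1 : G)} : Set G) = ⊤ := by
      ext g; simp [Subgroup.mem_centralizer_iff]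
    rw [h1, Subgroup.card_top]
    -- C is a proper subgroup
    have hne : ∃ g : G, g ∉ C := by
      by_contra h
      push_neg at h
      exact hx (Subgroup.mem_center_iff.mpr fun g =>
        (Subgroup.mem_centralizer_iff.mp (h g) x rfl).symm)
    obtain ⟨g, hg⟩ := hne
    have hss : (C : Set G) ⊂ Set.univ := ⟨Set.subset_univ _, fun h => hg (h (Set.mem_univ g))⟩
    have := Set.ncard_lt_ncard hss Set.finite_univ
    rwa [Set.ncard_univ, ← Nat.card_coe_set_eq] at this
  · set S : Set G := commSet x (K : Set G) with hSdef
    set H : Subgroup G := K ⊔ C with hHdef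
    have hKH : K ≤ H := le_sup_left
    have hCH : C ≤ H := le_sup_right
    have hSone : (1 : G) ∈ S := ⟨1, K.one_mem, by group⟩
    -- conjugation by centralizer elements preserves S
    have hconjC : ∀ c ∈ C, ∀ s ∈ S, c * s * c⁻¹ ∈ S := by
      rintro c hc s ⟨k, hk, rfl⟩
      refine ⟨c * k * c⁻¹, hK.conj_mem k hk c, ?_⟩
      have hcx : x * c = c * x := Subgroup.mem_centralizer_iff.mp hc x rfl
      have hcomm : Commute x c := hcx
      have e1 : c⁻¹ * x * c = x := by
        rw [mul_assoc, hcx, ← mul_assoc, inv_mul_cancel, one_mul]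
      have e2 : c * x⁻¹ = x⁻¹ * c := (hcomm.symm.inv_right).eq
      simp only [mul_inv_rev, inv_inv, mul_assoc]
      rw [← mul_assoc c x⁻¹, e2]
      simp only [mul_assoc]
      congr 1
      congr 1
      rw [← mul_assoc c⁻¹ x, ← mul_assoc (c⁻¹ * x) c, e1]
    -- conjugation by K preserves S
    have hconjK : ∀ k ∈ K, ∀ s ∈ S, k * s * k⁻¹ ∈ S := by
      intro k hk s hs
      have h := hns k⁻¹ (K.inv_mem hk)
      rw [← h]
      exact ⟨s, hs, by rw [inv_inv]⟩
    -- conjugation by H preserves S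
    have hconjH : ∀ g ∈ H, ∀ s ∈ S, g * s * g⁻¹ ∈ S := by
      intro g hg s hs
      obtain ⟨k, hk, c, hc, rfl⟩ := sup_decomp K C hg
      have h1 : c * s * c⁻¹ ∈ S := hconjC c hc s hs
      have h2 : k * (c * s * c⁻¹) * k⁻¹ ∈ S := hconjK k hk _ h1
      have : k * c * s * (k * c)⁻¹ = k * (c * s * c⁻¹) * k⁻¹ := by
        rw [mul_inv_rev]; group
      rwa [this]
    -- the ambient acting group
    set H' : Subgroup (ConjAct G) :=
      H.map (ConjAct.toConjAct : G ≃* ConjAct G).toMonoidHom with hH'def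
    have hsd : ∀ (a : ConjAct G) (ha : a ∈ H') (b : G),
        (⟨a, ha⟩ : H') • b = ConjAct.ofConjAct a * b * (ConjAct.ofConjAct a)⁻¹ :=
      fun a ha b => rfl
    -- the orbit of x under H' is x • S
    have horbx : MulAction.orbit H' x = (fun s => x * s) '' S := by
      ext z
      constructor
      · rintro ⟨⟨a, ha⟩, rfl⟩
        obtain ⟨g, hg, rfl⟩ := ha
        obtain ⟨k, hk, c, hc, rfl⟩ := sup_decomp K C hg
        have hcx : x * c = c * x := Subgroup.mem_centralizer_iff.mp hc x rfl
        refine ⟨x⁻¹ * (k⁻¹)⁻¹ * x * k⁻¹, ⟨k⁻¹, K.inv_mem hk, rfl⟩, ?_⟩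
        simp only [hsd, MulEquiv.coe_toMonoidHom, ConjAct.ofConjAct_toConjAct]
        have e1 : c * x * c⁻¹ = x := by
          rw [← hcx, mul_assoc, mul_inv_cancel, mul_one]
        symm
        rw [mul_inv_rev]
        calc k * c * x * (c⁻¹ * k⁻¹) = k * (c * x * c⁻¹) * k⁻¹ := by group
          _ = k * x * k⁻¹ := by rw [e1]
          _ = x * (x⁻¹ * (k⁻¹)⁻¹ * x * k⁻¹) := by group
      · rintro ⟨s, ⟨k, hk, rfl⟩, rfl⟩
        refine ⟨⟨ConjAct.toConjAct k⁻¹, ⟨k⁻¹, hKH (K.inv_mem hk), rfl⟩⟩, ?_⟩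
        refine (hsd _ _ x).trans ?_
        simp only [ConjAct.ofConjAct_toConjAct]
        group
    -- the orbit of y under H' is contained in S \ {1}
    have horby : MulAction.orbit H' y ⊆ S \ {1} := by
      rintro z ⟨⟨a, ha⟩, rfl⟩
      obtain ⟨g, hg, rfl⟩ := ha
      simp only [hsd, MulEquiv.coe_toMonoidHom, ConjAct.ofConjAct_toConjAct]
      refine ⟨hconjH g hg y hy, ?_⟩
      simp only [Set.mem_singleton_iff]
      intro h
      apply hy1
      have : y = g⁻¹ * 1 * g := by rw [← h]; group
      simpa using this
    -- cardinalities
    have hSfin : S.Finite := Set.toFinite S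
    have hfinorbx : Finite (MulAction.orbit H' x) := Set.toFinite _
    have hfinorby : Finite (MulAction.orbit H' y) := Set.toFinite _
    -- orbit-stabilizer for x and y
    have hosx : Nat.card (MulAction.orbit H' x) * Nat.card (MulAction.stabilizer H' x)
        = Nat.card H' := by
      rw [Nat.card_congr (MulAction.orbitEquivQuotientStabilizer H' x)]
      exact (Subgroup.card_eq_card_quotient_mul_card_subgroup _).symm
    have hosy : Nat.card (MulAction.orbit H' y) * Nat.card (MulAction.stabilizer H' y)
        = Nat.card H' := by
      rw [Nat.card_congr (MulAction.orbitEquivQuotientStabilizer H' y)]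
      exact (Subgroup.card_eq_card_quotient_mul_card_subgroup _).symm
    -- |orbit x| = |S|
    have hcardorbx : Nat.card (MulAction.orbit H' x) = S.ncard := by
      rw [Nat.card_coe_set_eq, horbx,
        Set.ncard_image_of_injective _ (mul_right_injective x)]
    -- stabilizer of x in H' has the same cardinality as C
    have hstabx : Nat.card (MulAction.stabilizer H' x) = Nat.card C := by
      apply Nat.card_congr
      refine ⟨fun p => ⟨ConjAct.ofConjAct (p.1 : ConjAct G), ?_⟩,
        fun c => ⟨⟨ConjAct.toConjAct (c : G), ⟨c, hCH c.2, rfl⟩⟩, ?_⟩, ?_, ?_⟩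
      · obtain ⟨⟨a, ha⟩, hpa⟩ := p
        have h' : ConjAct.ofConjAct a * x * (ConjAct.ofConjAct a)⁻¹ = x := by
          have h'' := MulAction.mem_stabilizer_iff.mp hpa
          rwa [hsd a ha] at h''
        refine Subgroup.mem_centralizer_iff.mpr ?_
        rintro h rfl
        set g := ConjAct.ofConjAct a
        have : g * h = h * g := by
          calc g * h = (g * h * g⁻¹) * g := by group
            _ = h * g := by rw [h']
        exact this.symm
      · have hc : x * (c : G) = (c : G) * x :=
          Subgroup.mem_centralizer_iff.mp c.2 x rfl
        refine MulAction.mem_stabilizer_iff.mpr ?_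
        refine (hsd _ _ x).trans ?_
        rw [ConjAct.ofConjAct_toConjAct, ← hc, mul_assoc, mul_inv_cancel, mul_one]
      · rintro ⟨⟨a, ha⟩, hpa⟩
        simp
      · rintro ⟨c, hc⟩
        simp
    -- stabilizer of y injects into the centralizer of y
    have hstaby : Nat.card (MulAction.stabilizer H' y)
        ≤ Nat.card (Subgroup.centralizer {y}) := by
      apply Nat.card_le_card_of_injective
        (f := fun p : MulAction.stabilizer H' y =>
          (⟨ConjAct.ofConjAct (p.1 : ConjAct G), by
            obtain ⟨⟨a, ha⟩, hpa⟩ := p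
            have h' : ConjAct.ofConjAct a * y * (ConjAct.ofConjAct a)⁻¹ = y := by
              have h'' := MulAction.mem_stabilizer_iff.mp hpa
              rwa [hsd a ha] at h''
            refine Subgroup.mem_centralizer_iff.mpr ?_
            rintro h rfl
            set g := ConjAct.ofConjAct a
            have : g * h = h * g := by
              calc g * h = (g * h * g⁻¹) * g := by group
                _ = h * g := by rw [h']
            exact this.symm⟩ : Subgroup.centralizer {y}))
      rintro ⟨⟨a, ha⟩, hpa⟩ ⟨⟨b, hb⟩, hpb⟩ hab
      simp only [Subtype.mk.injEq] at hab ⊢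
      exact (ConjAct.ofConjAct (G := G)).injective hab
    -- numerical bookkeeping
    have hnS : 0 < S.ncard := (Set.ncard_pos hSfin).mpr ⟨1, hSone⟩
    have hcC : 0 < Nat.card C := Nat.card_pos
    have horbylt : Nat.card (MulAction.orbit H' y) < S.ncard := by
      have h1 : Nat.card (MulAction.orbit H' y) ≤ (S \ {1}).ncard := by
        rw [Nat.card_coe_set_eq]
        exact Set.ncard_le_ncard horby hSfin.diff
      have h2 : (S \ {1}).ncard + 1 = S.ncard :=
        Set.ncard_diff_singleton_add_one hSone hSfin
      omega
    have hkey : Nat.card C < Nat.card (MulAction.stabilizer H' y) := by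
      by_contra h
      push_neg at h
      have h1 : Nat.card H' = S.ncard * Nat.card C := by
        rw [← hosx, hcardorbx, hstabx]
      have h2 : Nat.card (MulAction.orbit H' y) * Nat.card (MulAction.stabilizer H' y)
          ≤ Nat.card (MulAction.orbit H' y) * Nat.card C :=
        Nat.mul_le_mul_left _ h
      rw [hosy, h1] at h2
      have h3 : S.ncard ≤ Nat.card (MulAction.orbit H' y) :=
        Nat.le_of_mul_le_mul_right h2 hcC
      omega
    calc Nat.card C < Nat.card (MulAction.stabilizer H' y) := hkey
      _ ≤ Nat.card (Subgroup.centralizer {y}) := hstaby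
end

section
/- Let G be a finite group such that C_G(F(G)) ≤ F(G), and let Ḡ = G/Z(G). Then C_Ḡ(F(Ḡ)) ≤ F(Ḡ), i.e., the centralizer of the Fitting subgroup of G/Z(G) is contained in the Fitting subgroup of G/Z(G). -/
lemma mem_fitting_of {G : Type*} [Group G] {H : Subgroup G} (h : H.Normal ∧ Group.IsNilpotent ↥H) :
    H ≤ fittingSubgroup G := le_iSup₂ (f := fun (H : Subgroup G) (_ : H ∈ _) => H) H h

lemma fitting_induction {G : Type*} [Group G] (C : G → Prop) {x : G}
    (hx : x ∈ fittingSubgroup G)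
    (mem : ∀ (H : Subgroup G), H.Normal → Group.IsNilpotent ↥H → ∀ y ∈ H, C y)
    (one : C 1) (mul : ∀ a b, C a → C b → C (a * b)) : C x := by
  rw [fittingSubgroup, iSup_subtype'] at hx
  exact Subgroup.iSup_induction (C := C) _ hx (fun H y hy => mem H.1 H.2.1 H.2.2 y hy) one mul

lemma fitting_normal (G : Type*) [Group G] : (fittingSubgroup G).Normal := by
  constructor
  intro n hn g
  refine fitting_induction (fun n => g * n * g⁻¹ ∈ fittingSubgroup G) hn
    (fun H hN hnil y hy => mem_fitting_of ⟨hN, hnil⟩ (hN.conj_mem y hy g)) ?_ ?_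
  · simpa using (fittingSubgroup G).one_mem
  · intro a b ha hb
    have : g * (a * b) * g⁻¹ = (g * a * g⁻¹) * (g * b * g⁻¹) := by group
    rw [this]; exact (fittingSubgroup G).mul_mem ha hb

lemma centralizer_normal {G : Type*} [Group G] {N : Subgroup G} (hN : N.Normal) :
    (Subgroup.centralizer (N : Set G)).Normal := by
  constructor
  intro x hx g
  rw [Subgroup.mem_centralizer_iff] at hx ⊢
  intro n hn
  have h1 : g⁻¹ * n * g ∈ N := by simpa using hN.conj_mem n hn g⁻¹
  have := hx _ h1
  have : n * (g * x * g⁻¹) = g * ((g⁻¹ * n * g) * x) * g⁻¹ := by group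
  rw [this, hx _ h1]; group

lemma fitting_map_le {G : Type*} [Group G] (π : G →* G ⧸ Subgroup.center G)
    (hπ : Function.Surjective π) :
    (fittingSubgroup G).map π ≤ fittingSubgroup (G ⧸ Subgroup.center G) := by
  rintro _ ⟨x, hx, rfl⟩
  refine fitting_induction (fun x => π x ∈ fittingSubgroup _) hx ?_ (by simpa using Subgroup.one_mem _) ?_
  · intro H hN hnil y hy
    exact mem_fitting_of ⟨hN.map π hπ, nilpotent_of_surjective (h := hnil)
      (π.subgroupMap H) (π.subgroupMap_surjective H)⟩ ⟨y, hy, rfl⟩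
  · intro a b ha hb
    rw [map_mul]; exact Subgroup.mul_mem _ ha hb

/-- If `G` is a finite group with `C_G(F(G)) ≤ F(G)`, then the quotient `Ḡ = G/Z(G)`
satisfies `C_Ḡ(F(Ḡ)) ≤ F(Ḡ)`. -/
theorem stmt_9 {G : Type*} [Group G] [Finite G]
    (hC : Subgroup.centralizer (fittingSubgroup G : Set G) ≤ fittingSubgroup G) :
    Subgroup.centralizer
        ((fittingSubgroup (G ⧸ Subgroup.center G)) : Set (G ⧸ Subgroup.center G)) ≤
      fittingSubgroup (G ⧸ Subgroup.center G) := by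
  set Q := G ⧸ Subgroup.center G with hQ
  let π : G →* Q := QuotientGroup.mk' (Subgroup.center G)
  have hπ : Function.Surjective π := QuotientGroup.mk_surjective
  set FQ := fittingSubgroup Q with hFQ
  set D : Subgroup Q := Subgroup.centralizer (FQ : Set Q) with hD
  -- preimages
  set K : Subgroup G := FQ.comap π with hK
  set C : Subgroup G := D.comap π with hCdef
  have hF : fittingSubgroup G ≤ K := by
    rw [hK, ← Subgroup.map_le_iff_le_comap]
    exact fitting_map_le π hπ
  -- [C, K] ≤ center G
  have hCK : ⁅C, K⁆ ≤ Subgroup.center G := by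
    rw [Subgroup.commutator_le]
    intro x hx h hh
    open commutatorElement in
    have : π ⁅x, h⁆ = 1 := by
      rw [map_commutatorElement, commutatorElement_eq_one_iff_mul_comm]
      exact (Subgroup.mem_centralizer_iff.mp hx (π h) hh).symm
    rwa [← QuotientGroup.ker_mk' (Subgroup.center G), MonoidHom.mem_ker]
  have hcent : ∀ H : Subgroup G, Subgroup.center G ≤ Subgroup.centralizer (H : Set G) := by
    intro H
    intro z hz h _
    exact (Subgroup.mem_center_iff.mp hz h).symm ▸ (Subgroup.mem_center_iff.mp hz h)
  -- three subgroups lemma: [[C,C],K] = ⊥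
  have h3 : ⁅⁅C, C⁆, K⁆ = ⊥ := by
    apply Subgroup.commutator_commutator_eq_bot_of_rotate
    · rw [Subgroup.commutator_eq_bot_iff_le_centralizer]
      exact hCK.trans (hcent C)
    · rw [Subgroup.commutator_comm K C, Subgroup.commutator_eq_bot_iff_le_centralizer]
      exact hCK.trans (hcent C)
  have hCC : ⁅C, C⁆ ≤ fittingSubgroup G := by
    rw [Subgroup.commutator_eq_bot_iff_le_centralizer] at h3
    exact le_trans (h3.trans (Subgroup.centralizer_le (by exact_mod_cast hF))) hC
  -- [D, D] ≤ FQ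
  have hmapC : C.map π = D := Subgroup.map_comap_eq_self_of_surjective hπ D
  have hDD : ⁅D, D⁆ ≤ FQ := by
    rw [← hmapC, ← Subgroup.map_commutator]
    exact le_trans (Subgroup.map_mono hCC) (fitting_map_le π hπ)
  -- D is nilpotent
  have hnil : Group.IsNilpotent ↥D := by
    rw [nilpotent_iff_lowerCentralSeries]
    refine ⟨2, Subgroup.lowerCentralSeries_succ_eq_bot ⊤ ?_⟩
    rw [lowerCentralSeries_one, commutator_def, Subgroup.commutator_le]
    intro a _ b _
    rw [Subgroup.mem_center_iff]
    intro g
    open commutatorElement in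
    have hab : ((⁅a, b⁆ : ↥D) : Q) ∈ FQ := by
      have : ((⁅a, b⁆ : ↥D) : Q) = ⁅(a : Q), (b : Q)⁆ := by
        exact map_commutatorElement D.subtype a b
      exact hDD (this ▸ Subgroup.commutator_mem_commutator a.2 b.2)
    refine Subtype.ext ?_
    rw [Subgroup.coe_mul, Subgroup.coe_mul]
    exact (Subgroup.mem_centralizer_iff.mp g.2 _ hab).symm
  exact mem_fitting_of ⟨centralizer_normal (fitting_normal Q), hnil⟩
end

section
/- Let G be a finite solvable group with trivial center. Then the following two statements are equivalent: (1) M(G) ≤ Z(F(G)), i.e., every small element of G lies in the center of the Fitting subgroup F(G); (2) [x, F(G)] is a normal subset of F(G) for every small element x of G. -/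
namespace Stmt10Aux

open Subgroup Pointwise

variable {G : Type*} [Group G]

/-- conjugation orbit of `z` under subgroup `H` -/
def conjOrbit (H : Subgroup G) (z : G) : Set G := {g | ∃ c ∈ H, c * z * c⁻¹ = g}

theorem card_conjOrbit_mul [Finite G] (H : Subgroup G) (z : G) :
    Nat.card (conjOrbit H z) * Nat.card (H ⊓ Subgroup.centralizer {z} : Subgroup G)
      = Nat.card H := by
  classical
  set f := (ConjAct.toConjAct : G ≃* ConjAct G).toMonoidHom with hf
  set K : Subgroup (ConjAct G) := H.map f with hK
  have hsmul : ∀ (k : K), k • z = ConjAct.ofConjAct ((k : ConjAct G)) * z * (ConjAct.ofConjAct ((k : ConjAct G)))⁻¹ := by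
    intro k
    rw [Subgroup.smul_def, ConjAct.smul_def]
  have horb : MulAction.orbit K z = conjOrbit H z := by
    ext g
    constructor
    · rintro ⟨⟨k, hk⟩, rfl⟩
      obtain ⟨c, hc, rfl⟩ := hk
      exact ⟨c, hc, by simp only [hsmul]; rfl⟩
    · rintro ⟨c, hc, rfl⟩
      exact ⟨⟨f c, ⟨c, hc, rfl⟩⟩, by simp only [hsmul]; rfl⟩
  have hstabmem : ∀ k : K, (k ∈ MulAction.stabilizer K z ↔ ConjAct.ofConjAct ((k : ConjAct G)) * z * (ConjAct.ofConjAct ((k : ConjAct G)))⁻¹ = z) := by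
    intro k
    rw [MulAction.mem_stabilizer_iff, hsmul]
  have hstab : Nat.card (MulAction.stabilizer K z)
      = Nat.card (H ⊓ Subgroup.centralizer {z} : Subgroup G) := by
    apply Nat.card_congr
    have hmem1 : ∀ s : MulAction.stabilizer K z,
        ConjAct.ofConjAct (((s : K)) : ConjAct G) ∈ H ⊓ Subgroup.centralizer {z} := by
      intro s
      rw [Subgroup.mem_inf]
      constructor
      · obtain ⟨c, hc, hceq⟩ := (s : K).2
        have : c = ConjAct.ofConjAct (((s : K)) : ConjAct G) := by rw [← hceq]; rfl
        rw [← this]; exact hc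
      · rw [Subgroup.mem_centralizer_iff]
        intro w hw
        rw [Set.mem_singleton_iff] at hw
        rw [hw]
        have hfix := (hstabmem (s : K)).mp s.2
        set c := ConjAct.ofConjAct (((s : K)) : ConjAct G) with hc
        calc z * c = (c * z * c⁻¹) * c := by rw [hfix]
          _ = c * z := by group
    have hmem2 : ∀ a : ↥(H ⊓ Subgroup.centralizer {z}), f (a : G) ∈ K := fun a => ⟨(a : G), a.2.1, rfl⟩
    have hmem3 : ∀ a : ↥(H ⊓ Subgroup.centralizer {z}),
        (⟨f (a : G), hmem2 a⟩ : K) ∈ MulAction.stabilizer K z := by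
      intro a
      rw [hstabmem]
      have h1 : ConjAct.ofConjAct (((⟨f (a : G), hmem2 a⟩ : K)) : ConjAct G) = (a : G) := rfl
      rw [h1]
      have hc : (a : G) ∈ Subgroup.centralizer {z} := a.2.2
      rw [Subgroup.mem_centralizer_iff] at hc
      have h2 := hc z (Set.mem_singleton z)
      calc (a : G) * z * (a : G)⁻¹ = (z * (a:G)) * (a : G)⁻¹ := by rw [← h2]
        _ = z := by group
    refine ⟨fun s => ⟨ConjAct.ofConjAct (((s : K)) : ConjAct G), hmem1 s⟩,
      fun a => ⟨⟨f (a : G), hmem2 a⟩, hmem3 a⟩, ?_, ?_⟩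
    · intro s; ext; simp [f]
    · intro a; ext; rfl
  have horbstab : Nat.card (MulAction.orbit K z) * Nat.card (MulAction.stabilizer K z) = Nat.card K := by
    rw [Nat.card_congr (MulAction.orbitEquivQuotientStabilizer K z)]
    exact (Subgroup.card_eq_card_quotient_mul_card_subgroup (MulAction.stabilizer K z)).symm
  have hKH : Nat.card K = Nat.card H :=
    (Nat.card_congr (Subgroup.equivMapOfInjective H f (ConjAct.toConjAct : G ≃* ConjAct G).injective).toEquiv).symm
  rw [← horb, ← hstab, horbstab, hKH]

theorem card_sup_mul_card_inf [Finite G] (A N : Subgroup G) [N.Normal] :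
    Nat.card (A ⊔ N : Subgroup G) * Nat.card (N ⊓ A : Subgroup G)
      = Nat.card A * Nat.card N := by
  have h1 : N.relIndex (A ⊔ N) = N.relIndex A := Subgroup.relIndex_sup_right A N
  have hcard : ∀ B : Subgroup G, Nat.card (N ⊓ B : Subgroup G) * N.relIndex B = Nat.card B := by
    intro B
    have h : N.relIndex B = ((N ⊓ B).subgroupOf B).index := by
      rw [Subgroup.inf_subgroupOf_right N B]; rfl
    rw [h]
    have := Subgroup.card_mul_index ((N ⊓ B).subgroupOf B)
    rwa [Nat.card_congr (Subgroup.subgroupOfEquivOfLe (inf_le_right : N ⊓ B ≤ B)).toEquiv] at this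
  have h2 := hcard (A ⊔ N)
  have h3 := hcard A
  have hNle : N ⊓ (A ⊔ N) = N := by rw [inf_eq_left]; exact le_sup_right
  rw [hNle, h1] at h2
  calc Nat.card (A ⊔ N : Subgroup G) * Nat.card (N ⊓ A : Subgroup G)
      = Nat.card (N ⊓ A : Subgroup G) * Nat.card (A ⊔ N : Subgroup G) := by ring
    _ = Nat.card (N ⊓ A : Subgroup G) * (Nat.card N * N.relIndex A) := by rw [← h2]
    _ = (Nat.card (N ⊓ A : Subgroup G) * N.relIndex A) * Nat.card N := by ring
    _ = Nat.card A * Nat.card N := by rw [h3]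

/-- iterated commutator chain `N, [N,H], [[N,H],H], ...` -/
def commChain {H : Type*} [Group H] (N : Subgroup H) : ℕ → Subgroup H
  | 0 => N
  | (k + 1) => ⁅commChain N k, ⊤⁆

theorem inf_center_ne_bot {H : Type*} [Group H] (hn : Group.IsNilpotent H)
    (N : Subgroup H) (hN : N.Normal) (h : N ≠ ⊥) : N ⊓ Subgroup.center H ≠ ⊥ := by
  classical
  haveI := hN
  obtain ⟨n, hlcs⟩ := _root_.nilpotent_iff_lowerCentralSeries.mp hn
  set f : ℕ → Subgroup H := commChain N with hfdef
  have hf0 : f 0 = N := rfl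
  have hfs : ∀ k, f (k + 1) = ⁅f k, ⊤⁆ := fun k => rfl
  have hle : ∀ k, f k ≤ Subgroup.lowerCentralSeries (⊤ : Subgroup H) k := by
    intro k
    induction k with
    | zero => rw [hf0, Subgroup.lowerCentralSeries_zero]; exact le_top
    | succ k ih =>
        rw [hfs, Subgroup.lowerCentralSeries_succ]
        exact Subgroup.commutator_mono ih le_rfl
  have hfN : ∀ k, f k ≤ N := by
    intro k
    induction k with
    | zero => rw [hf0]
    | succ k ih =>
        rw [hfs]
        calc ⁅f k, ⊤⁆ ≤ ⁅N, ⊤⁆ := Subgroup.commutator_mono ih le_rfl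
          _ ≤ N := Subgroup.commutator_le_left N ⊤
  have hfn : f n = ⊥ := le_bot_iff.mp (hlcs ▸ hle n)
  have hfind : ∀ m, f m = ⊥ → ∃ j, f j ≠ ⊥ ∧ f (j + 1) = ⊥ := by
    intro m
    induction m with
    | zero => intro h0; rw [hf0] at h0; exact absurd h0 h
    | succ m ih =>
        intro hsucc
        rcases Classical.em (f m = ⊥) with hm | hm
        · exact ih hm
        · exact ⟨m, hm, hsucc⟩
  obtain ⟨j, hTne, hjsucc⟩ := hfind n hfn
  have hTcomm : ⁅f j, (⊤ : Subgroup H)⁆ = (⊥ : Subgroup H) := by rw [← hfs]; exact hjsucc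
  have hTcent : f j ≤ Subgroup.center H := by
    have := Subgroup.commutator_eq_bot_iff_le_centralizer.mp hTcomm
    rwa [Subgroup.coe_top, Subgroup.centralizer_univ] at this
  intro hbot
  apply hTne
  rw [← le_bot_iff, ← hbot]
  exact le_inf (hfN j) hTcent

theorem normal_map_of_char {N : Subgroup G} (hN : N.Normal) (H : Subgroup N)
    (hH : H.Characteristic) : (H.map N.subtype).Normal := by
  haveI := hN
  constructor
  rintro a ⟨b, hb, rfl⟩ g
  have hmap := Subgroup.characteristic_iff_map_eq.mp hH (MulAut.conjNormal g)
  refine ⟨(MulAut.conjNormal g) b, ?_, ?_⟩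
  · rw [← hmap]; exact ⟨b, hb, rfl⟩
  · exact MulAut.conjNormal_apply g b

instance derivedSeries_char (H : Type*) [Group H] (n : ℕ) :
    (derivedSeries H n).Characteristic := by
  induction n with
  | zero => rw [derivedSeries_zero]; infer_instance
  | succ n ih => rw [derivedSeries_succ]; exact @Subgroup.commutator_characteristic _ _ _ _ ih ih

theorem subgroupOf_sup_self (A B : Subgroup G) (hA : A.Normal) (hB : B.Normal) :
    A.subgroupOf (A ⊔ B) ⊔ B.subgroupOf (A ⊔ B) = ⊤ := by
  haveI := hA; haveI := hB
  rw [eq_top_iff]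
  rintro ⟨x, hx⟩ -
  have hx' : x ∈ (A : Set G) * (B : Set G) := by
    rw [← Subgroup.mul_normal A B]; exact hx
  obtain ⟨a, ha, b, hb, rfl⟩ := hx'
  have haC : a ∈ A ⊔ B := Subgroup.mem_sup_left ha
  have hbC : b ∈ A ⊔ B := Subgroup.mem_sup_right hb
  have heq : (⟨a * b, hx⟩ : ↥(A ⊔ B)) = ⟨a, haC⟩ * ⟨b, hbC⟩ := rfl
  rw [heq]
  exact mul_mem
    (Subgroup.mem_sup_left ((Subgroup.mem_subgroupOf).mpr ha))
    (Subgroup.mem_sup_right ((Subgroup.mem_subgroupOf).mpr hb))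

theorem pairwise_nilpotent {J : Type*} [Group J] [Finite J] (H K : Subgroup J)
    (hHn : H.Normal) (hKn : K.Normal) (hH : Group.IsNilpotent H) (hK : Group.IsNilpotent K)
    (hsup : H ⊔ K = ⊤) : Group.IsNilpotent J := by
  classical
  haveI := hHn; haveI := hKn
  have htfaeJ : Group.IsNilpotent J ↔
      ∀ (p : ℕ) (_hp : Fact p.Prime) (P : Sylow p J), (↑P : Subgroup J).Normal :=
    (isNilpotent_of_finite_tfae (G := J)).out 0 3
  have htfaeH : Group.IsNilpotent ↥H ↔
      ∀ (p : ℕ) (_hp : Fact p.Prime) (P : Sylow p ↥H), (↑P : Subgroup ↥H).Normal :=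
    (isNilpotent_of_finite_tfae (G := ↥H)).out 0 3
  have htfaeK : Group.IsNilpotent ↥K ↔
      ∀ (p : ℕ) (_hp : Fact p.Prime) (P : Sylow p ↥K), (↑P : Subgroup ↥K).Normal :=
    (isNilpotent_of_finite_tfae (G := ↥K)).out 0 3
  apply htfaeJ.mpr
  intro p hp L
  haveI := hp
  obtain ⟨P'⟩ : Nonempty (Sylow p H) := inferInstance
  obtain ⟨Q'⟩ : Nonempty (Sylow p K) := inferInstance
  have hP'n : (P' : Subgroup H).Normal := htfaeH.mp hH p hp P'
  have hQ'n : (Q' : Subgroup K).Normal := htfaeK.mp hK p hp Q'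
  have hP'c : (P' : Subgroup H).Characteristic := Sylow.characteristic_of_normal P' hP'n
  have hQ'c : (Q' : Subgroup K).Characteristic := Sylow.characteristic_of_normal Q' hQ'n
  set P : Subgroup J := (P' : Subgroup H).map H.subtype with hPdef
  set Q : Subgroup J := (Q' : Subgroup K).map K.subtype with hQdef
  have hPn : P.Normal := normal_map_of_char hHn _ hP'c
  have hQn : Q.Normal := normal_map_of_char hKn _ hQ'c
  haveI := hPn; haveI := hQn
  have hPp : IsPGroup p P := P'.isPGroup'.map _
  have hQp : IsPGroup p Q := Q'.isPGroup'.map _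
  set N : Subgroup J := P ⊔ Q with hNdef
  have hNn : N.Normal := Subgroup.sup_normal P Q
  haveI := hNn
  have hNp : IsPGroup p N := IsPGroup.to_sup_of_normal_right hPp hQp
  have hNL : N ≤ (L : Subgroup J) := by
    have hsupP : IsPGroup p ↥(N ⊔ (L : Subgroup J)) :=
      IsPGroup.to_sup_of_normal_left hNp L.isPGroup'
    have heq := L.3 hsupP le_sup_right
    rw [← heq]; exact le_sup_left
  set π := QuotientGroup.mk' N with hπdef
  have hπsurj : Function.Surjective π := QuotientGroup.mk'_surjective N
  have hkercontains : ∀ (A : Subgroup J) (hAn : A.Normal) (R : Sylow p A),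
      ((R : Subgroup A).map A.subtype ≤ N) → ¬ p ∣ Nat.card (A.map π) := by
    intro A hAn R hRN hdvd
    set ψ : ↥A →* J ⧸ N := π.comp A.subtype with hψdef
    have hrange : ψ.range = A.map π := by
      rw [hψdef, MonoidHom.range_comp, Subgroup.range_subtype]
    have hcard : Nat.card (A.map π) = ψ.ker.index := by
      rw [← hrange, Subgroup.index]
      exact (Nat.card_congr (QuotientGroup.quotientKerEquivRange ψ).toEquiv).symm
    have hRker : (R : Subgroup A) ≤ ψ.ker := by
      intro a haR
      rw [MonoidHom.mem_ker]
      have h1 : (a : J) ∈ N := hRN ⟨a, haR, rfl⟩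
      show π (a : J) = 1
      rw [← QuotientGroup.ker_mk' N] at h1
      exact h1
    have hdvd2 : ψ.ker.index ∣ (R : Subgroup A).index := Subgroup.index_dvd_of_le hRker
    haveI : (R : Subgroup A).FiniteIndex := ⟨Subgroup.index_ne_zero_of_finite⟩
    exact R.not_dvd_index ((hcard ▸ hdvd).trans hdvd2)
  have hHc : ¬ p ∣ Nat.card (H.map π) := hkercontains H hHn P' le_sup_left
  have hKc : ¬ p ∣ Nat.card (K.map π) := hkercontains K hKn Q' le_sup_right
  have hquotcard : ¬ p ∣ Nat.card (J ⧸ N) := by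
    have hHm : (H.map π).Normal := hHn.map π hπsurj
    haveI := hHm
    have htop : (H.map π) ⊔ (K.map π) = ⊤ := by
      rw [← Subgroup.map_sup, hsup, Subgroup.map_top_of_surjective π hπsurj]
    have hdvd : Nat.card ((K.map π) ⊔ (H.map π) : Subgroup (J ⧸ N))
        ∣ Nat.card (K.map π) * Nat.card (H.map π) :=
      ⟨Nat.card ((H.map π) ⊓ (K.map π) : Subgroup (J ⧸ N)),
        (card_sup_mul_card_inf (K.map π) (H.map π)).symm⟩
    rw [sup_comm, htop] at hdvd
    have hcardtop : Nat.card (⊤ : Subgroup (J ⧸ N)) = Nat.card (J ⧸ N) :=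
      Nat.card_congr Subgroup.topEquiv.toEquiv
    rw [hcardtop] at hdvd
    intro hpd
    exact (Nat.Prime.not_dvd_mul hp.out hKc hHc) (hpd.trans hdvd)
  have hLN : (L : Subgroup J) ≤ N := by
    intro y hy
    obtain ⟨k, hk⟩ := L.isPGroup' ⟨y, hy⟩
    have hyk : y ^ (p ^ k) = 1 := by
      have h2 := congrArg (fun t : ↥(L : Subgroup J) => (t : J)) hk
      simpa using h2
    have hordy : orderOf (π y) ∣ p ^ k := by
      apply orderOf_dvd_of_pow_eq_one
      rw [← map_pow, hyk, map_one]
    have hordcard : orderOf (π y) ∣ Nat.card (J ⧸ N) := orderOf_dvd_natCard _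
    have hcop : Nat.Coprime (p ^ k) (Nat.card (J ⧸ N)) :=
      (Nat.Prime.coprime_iff_not_dvd hp.out |>.mpr hquotcard).pow_left k
    have hord1 : orderOf (π y) = 1 :=
      Nat.dvd_one.mp (hcop ▸ Nat.dvd_gcd hordy hordcard)
    have hπy : π y = 1 := orderOf_eq_one_iff.mp hord1
    have hker : y ∈ (QuotientGroup.mk' N).ker := MonoidHom.mem_ker.mpr hπy
    rwa [QuotientGroup.ker_mk' N] at hker
  have hLeq : (L : Subgroup J) = N := le_antisymm hLN hNL
  rw [hLeq]
  exact hNn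

section FittingFacts

theorem le_fitting {H : Subgroup G} (h1 : H.Normal) (h2 : Group.IsNilpotent H) :
    H ≤ fittingSubgroup G := by
  rw [fittingSubgroup]
  exact le_iSup₂ (f := fun (H : Subgroup G) (_ : H ∈ {H : Subgroup G | H.Normal ∧ Group.IsNilpotent ↥H}) => H) H ⟨h1, h2⟩

theorem fittingSubgroup_normal : (fittingSubgroup G).Normal := by
  constructor
  intro n hn g
  have hn' : n ∈ ⨆ (H : {H : Subgroup G | H.Normal ∧ Group.IsNilpotent ↥H}), (H : Subgroup G) := by
    have heq : fittingSubgroup G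
        = ⨆ (H : {H : Subgroup G | H.Normal ∧ Group.IsNilpotent ↥H}), (H : Subgroup G) := by
      rw [fittingSubgroup]
      exact (iSup_subtype'' {H : Subgroup G | H.Normal ∧ Group.IsNilpotent ↥H} id).symm
    rw [← heq]
    exact hn
  refine Subgroup.iSup_induction (C := fun y => g * y * g⁻¹ ∈ fittingSubgroup G) _ hn' ?_ ?_ ?_
  · intro H x hx
    have : g * x * g⁻¹ ∈ (H : Subgroup G) := H.2.1.conj_mem x hx g
    exact le_fitting H.2.1 H.2.2 this
  · simpa using (fittingSubgroup G).one_mem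
  · intro x y hx hy
    have : (g * x * g⁻¹) * (g * y * g⁻¹) = g * (x * y) * g⁻¹ := by group
    rw [← this]
    exact mul_mem hx hy

theorem sup_normal_nilpotent [Finite G] {A B : Subgroup G} (hA : A.Normal) (hB : B.Normal)
    (ha : Group.IsNilpotent A) (hb : Group.IsNilpotent B) : Group.IsNilpotent ↥(A ⊔ B) := by
  haveI := hA; haveI := hB
  refine pairwise_nilpotent (A.subgroupOf (A ⊔ B)) (B.subgroupOf (A ⊔ B)) inferInstance
    inferInstance ?_ ?_ (subgroupOf_sup_self A B hA hB)
  · haveI := ha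
    exact nilpotent_of_mulEquiv (Subgroup.subgroupOfEquivOfLe (le_sup_left : A ≤ A ⊔ B)).symm
  · haveI := hb
    exact nilpotent_of_mulEquiv (Subgroup.subgroupOfEquivOfLe (le_sup_right : B ≤ A ⊔ B)).symm

theorem fittingSubgroup_isNilpotent [Finite G] : Group.IsNilpotent ↥(fittingSubgroup G) := by
  classical
  set s : Set (Subgroup G) := {H : Subgroup G | H.Normal ∧ Group.IsNilpotent ↥H} with hs
  have hfin : s.Finite := Set.toFinite _
  have hne : hfin.toFinset.Nonempty := by
    refine ⟨⊥, ?_⟩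
    rw [Set.Finite.mem_toFinset]
    exact ⟨inferInstance, inferInstance⟩
  obtain ⟨M, hMmem, hMmax⟩ := hfin.toFinset.exists_maximal hne
  rw [Set.Finite.mem_toFinset] at hMmem
  have hall : ∀ H ∈ s, H ≤ M := by
    intro H hH
    have hsupmem : H ⊔ M ∈ s := by
      haveI := hH.1; haveI := hMmem.1
      exact ⟨Subgroup.sup_normal H M, sup_normal_nilpotent hH.1 hMmem.1 hH.2 hMmem.2⟩
    have : ¬ M < H ⊔ M := fun hlt => lt_irrefl M (lt_of_lt_of_le hlt (hMmax (Set.Finite.mem_toFinset _ |>.mpr hsupmem) hlt.le))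
    have heq : H ⊔ M = M := by
      rcases eq_or_ne (H ⊔ M) M with h | h
      · exact h
      · exact absurd (lt_of_le_of_ne le_sup_right (Ne.symm h)) this
    calc H ≤ H ⊔ M := le_sup_left
      _ = M := heq
  have hFM : fittingSubgroup G = M := by
    apply le_antisymm
    · rw [fittingSubgroup]
      exact iSup₂_le hall
    · exact le_fitting hMmem.1 hMmem.2
  rw [hFM]
  exact hMmem.2

theorem centralizer_fitting_le [Finite G] (hsolv : IsSolvable G) :
    Subgroup.centralizer (fittingSubgroup G : Set G) ≤ fittingSubgroup G := by
  set F := fittingSubgroup G with hF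
  have hFn : F.Normal := fittingSubgroup_normal
  set C := Subgroup.centralizer (F : Set G) with hC
  have hCn : C.Normal := by
    constructor
    intro n hn g
    rw [hC, Subgroup.mem_centralizer_iff] at hn ⊢
    intro h hh
    have hh' : g⁻¹ * h * g ∈ (F : Set G) := by
      have := hFn.conj_mem h hh g⁻¹
      simpa using this
    have hcomm := hn (g⁻¹ * h * g) hh'
    calc h * (g * n * g⁻¹) = g * ((g⁻¹ * h * g) * n) * g⁻¹ := by group
      _ = g * (n * (g⁻¹ * h * g)) * g⁻¹ := by rw [hcomm]
      _ = (g * n * g⁻¹) * h := by group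
  haveI := hCn
  haveI : Group.IsSolvable G := hsolv
  haveI : Group.IsSolvable ↥C := inferInstance
  obtain ⟨n₀, hn₀⟩ := (inferInstance : Group.IsSolvable ↥C).solvable
  have key : ∀ k, (derivedSeries ↥C (n₀ - k)).map C.subtype ≤ F := by
    intro k
    induction k with
    | zero =>
        have h0 : n₀ - 0 = n₀ := by omega
        rw [h0, hn₀]
        simp
    | succ k ih =>
        rcases le_or_gt n₀ k with hk | hk
        · have h1 : n₀ - (k + 1) = n₀ - k := by omega
          rw [h1]; exact ih
        · have hsucc : n₀ - k = (n₀ - (k + 1)) + 1 := by omega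
          rw [hsucc] at ih
          set j := n₀ - (k + 1) with hj
          set D := (derivedSeries ↥C j).map C.subtype with hD
          have hDn : D.Normal := normal_map_of_char hCn _ inferInstance
          have hDC : D ≤ C := Subgroup.map_subtype_le _
          have hcomm : ⁅D, D⁆ = (derivedSeries ↥C (j + 1)).map C.subtype := by
            rw [derivedSeries_succ, hD]
            exact (Subgroup.map_commutator _ _ _).symm
          have hcommF : ⁅D, D⁆ ≤ F := by rw [hcomm]; exact ih
          have hcent : ∀ w ∈ ⁅D, D⁆, ∀ c ∈ C, w * c = c * w := by
            intro w hw c hc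
            have hwF : w ∈ F := hcommF hw
            rw [hC, Subgroup.mem_centralizer_iff] at hc
            exact hc w hwF
          have hnil : Group.IsNilpotent ↥D := by
            rw [_root_.nilpotent_iff_lowerCentralSeries]
            refine ⟨2, ?_⟩
            have h1 : Subgroup.lowerCentralSeries (⊤ : Subgroup ↥D) 1 ≤ Subgroup.center ↥D := by
              intro u hu
              have hu' : (u : G) ∈ ⁅D, D⁆ := by
                have hmm := Subgroup.mem_map_of_mem D.subtype hu
                have hlcs1 : Subgroup.lowerCentralSeries (⊤ : Subgroup ↥D) 1 = ⁅(⊤ : Subgroup ↥D), ⊤⁆ := by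
                  rw [Subgroup.lowerCentralSeries_one, commutator_def]
                have hmaptop : (⊤ : Subgroup ↥D).map D.subtype = D := by
                  rw [← MonoidHom.range_eq_map, Subgroup.range_subtype]
                rw [hlcs1, Subgroup.map_commutator, hmaptop] at hmm
                exact hmm
              rw [Subgroup.mem_center_iff]
              intro d
              have hcd := hcent _ hu' _ (hDC d.2)
              exact Subtype.ext (by
                push_cast
                exact hcd.symm)
            have hc2 : ⁅Subgroup.center ↥D, (⊤ : Subgroup ↥D)⁆ = ⊥ := by
              rw [Subgroup.commutator_eq_bot_iff_le_centralizer]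
              rw [Subgroup.coe_top, Subgroup.centralizer_univ]
            have h2 : Subgroup.lowerCentralSeries (⊤ : Subgroup ↥D) 2 ≤ ⊥ := by
              rw [Subgroup.lowerCentralSeries_succ]
              exact le_trans (Subgroup.commutator_mono h1 le_rfl) (le_of_eq hc2)
            exact le_bot_iff.mp h2
          exact le_fitting hDn hnil
  have hfinal := key n₀
  have h0 : n₀ - n₀ = 0 := by omega
  rw [h0, derivedSeries_zero] at hfinal
  have hmaptop : (⊤ : Subgroup ↥C).map C.subtype = C := by
    rw [← MonoidHom.range_eq_map, Subgroup.range_subtype]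
  rwa [hmaptop] at hfinal

end FittingFacts

theorem centralizer_normal (N : Subgroup G) (hN : N.Normal) :
    (Subgroup.centralizer (N : Set G)).Normal := by
  constructor
  intro n hn g
  rw [Subgroup.mem_centralizer_iff] at hn ⊢
  intro h hh
  have hh' : g⁻¹ * h * g ∈ (N : Set G) := by
    have := hN.conj_mem h hh g⁻¹
    simpa using this
  have hcomm := hn (g⁻¹ * h * g) hh'
  calc h * (g * n * g⁻¹) = g * ((g⁻¹ * h * g) * n) * g⁻¹ := by group
    _ = g * (n * (g⁻¹ * h * g)) * g⁻¹ := by rw [hcomm]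
    _ = (g * n * g⁻¹) * h := by group

theorem classCard_pos [Finite G] (x : G) : 0 < classCard x := by
  rw [classCard]
  have : Nonempty (conjugatesOf x) := ⟨⟨x, mem_conjugatesOf_self⟩⟩
  exact Nat.card_pos

theorem classCard_eq_one_iff [Finite G] (x : G) :
    classCard x = 1 ↔ x ∈ Subgroup.center G := by
  constructor
  · intro h
    rw [classCard, Nat.card_coe_set_eq, Set.ncard_eq_one] at h
    obtain ⟨a, ha⟩ := h
    have hxa : x = a := by
      have hself : x ∈ conjugatesOf x := mem_conjugatesOf_self
      rw [ha] at hself; exact hself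
    rw [Subgroup.mem_center_iff]
    intro g
    have hconj : IsConj x (g * x * g⁻¹) := isConj_iff.mpr ⟨g, rfl⟩
    have hmem : g * x * g⁻¹ ∈ conjugatesOf x := hconj
    rw [ha, ← hxa, Set.mem_singleton_iff] at hmem
    calc g * x = (g * x * g⁻¹) * g := by group
      _ = x * g := by rw [hmem]
  · intro h
    have hsingle : conjugatesOf x = {x} := by
      ext b
      constructor
      · intro hb
        obtain ⟨c, hc⟩ := isConj_iff.mp hb
        have hcx := (Subgroup.mem_center_iff.mp h) c
        have hfix : c * x * c⁻¹ = x := by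
          calc c * x * c⁻¹ = x * c * c⁻¹ := by rw [hcx]
            _ = x := by group
        rw [← hc, hfix]; rfl
      · intro hb
        rw [Set.mem_singleton_iff] at hb
        rw [hb]; exact mem_conjugatesOf_self
    rw [classCard, hsingle, Nat.card_coe_set_eq, Set.ncard_singleton]

theorem small_no_smaller [Finite G] (hzcent : Subgroup.center G = ⊥) {x z : G}
    (hx : IsSmall x) (hz1 : z ≠ 1) (hlt : classCard z < classCard x) : False := by
  have hzpos := classCard_pos z
  have h1mem : (1 : ℕ) ∈ {n : ℕ | (∃ g : G, classCard g = n) ∧ n < classCard x} := by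
    refine ⟨⟨1, ?_⟩, by omega⟩
    rw [classCard_eq_one_iff]
    exact Subgroup.one_mem _
  have hzmem : classCard z ∈ {n : ℕ | (∃ g : G, classCard g = n) ∧ n < classCard x} :=
    ⟨⟨z, rfl⟩, hlt⟩
  have heq : classCard z = 1 := hx hzmem h1mem
  have hzc : z ∈ Subgroup.center G := (classCard_eq_one_iff z).mp heq
  rw [hzcent, Subgroup.mem_bot] at hzc
  exact hz1 hzc

theorem conj_comm_elt {x c k : G} (hxc : x * c = c * x) :
    c * (x⁻¹ * k⁻¹ * x * k) * c⁻¹ = x⁻¹ * (c * k * c⁻¹)⁻¹ * x * (c * k * c⁻¹) := by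
  have hcomm : Commute x c := hxc
  have e1 : c * x * c⁻¹ = x := by rw [← hxc]; group
  have h1 : c * x⁻¹ = x⁻¹ * c := hcomm.inv_left.eq.symm
  have e2 : c * x⁻¹ * c⁻¹ = x⁻¹ := by rw [h1]; group
  calc c * (x⁻¹ * k⁻¹ * x * k) * c⁻¹
      = (c * x⁻¹ * c⁻¹) * (c * k⁻¹ * c⁻¹) * (c * x * c⁻¹) * (c * k * c⁻¹) := by group
    _ = x⁻¹ * (c * k⁻¹ * c⁻¹) * x * (c * k * c⁻¹) := by rw [e1, e2]
    _ = x⁻¹ * (c * k * c⁻¹)⁻¹ * x * (c * k * c⁻¹) := by group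

theorem classCard_mul_card_centralizer [Finite G] (g : G) :
    classCard g * Nat.card (Subgroup.centralizer {g} : Subgroup G) = Nat.card G := by
  have h := card_conjOrbit_mul (⊤ : Subgroup G) g
  have he : conjOrbit (⊤ : Subgroup G) g = conjugatesOf g := by
    ext y
    constructor
    · rintro ⟨c, -, rfl⟩
      exact isConj_iff.mpr ⟨c, rfl⟩
    · intro hy
      obtain ⟨c, hc⟩ := isConj_iff.mp hy
      exact ⟨c, trivial, hc⟩
  rw [he, top_inf_eq, Subgroup.card_top] at h
  rw [classCard]
  exact h

end Stmt10Aux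

/-- For a finite solvable group `G` with trivial center, the following are equivalent:
(1) `M(G) ≤ Z(F(G))`; (2) `[x, F(G)]` is a normal subset of `F(G)` for all small `x`. -/
theorem stmt_10 {G : Type*} [Group G] [Finite G] (hsolv : IsSolvable G)
    (hz : Subgroup.center G = ⊥) :
    smallGen G ≤ (Subgroup.center ↥(fittingSubgroup G)).map (fittingSubgroup G).subtype ↔
    ∀ x : G, IsSmall x →
      IsNormalSubsetOf (commSet x (fittingSubgroup G : Set G)) (fittingSubgroup G : Set G) := by
  classical
  open Stmt10Aux in
  set F := fittingSubgroup G with hFdef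
  have hFn : F.Normal := Stmt10Aux.fittingSubgroup_normal
  haveI := hFn
  have hFnil : Group.IsNilpotent ↥F := Stmt10Aux.fittingSubgroup_isNilpotent
  constructor
  · -- (1) → (2)
    intro h1 x hx
    have hxmem : x ∈ smallGen G := Subgroup.subset_closure hx
    obtain ⟨y, hy, hyx⟩ := Subgroup.mem_map.mp (h1 hxmem)
    have hcomm : ∀ k ∈ F, x * k = k * x := by
      intro k hk
      have h := (Subgroup.mem_center_iff.mp hy) ⟨k, hk⟩
      have h2 := congrArg (fun t : ↥F => (t : G)) h
      simp only [Subgroup.coe_mul] at h2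
      have hyx' : (y : G) = x := hyx
      rw [hyx'] at h2
      exact h2.symm
    have hset : commSet x (F : Set G) = {1} := by
      ext w
      constructor
      · rintro ⟨k, hk, rfl⟩
        have h := hcomm k hk
        have : x⁻¹ * k⁻¹ * x * k = 1 := by
          calc x⁻¹ * k⁻¹ * x * k = x⁻¹ * k⁻¹ * (x * k) := by group
            _ = x⁻¹ * k⁻¹ * (k * x) := by rw [h]
            _ = 1 := by group
        simpa using this
      · intro hw
        rw [Set.mem_singleton_iff] at hw
        exact ⟨1, F.one_mem, by rw [hw]; group⟩
    intro k hk
    rw [hset, Set.image_singleton]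
    simp
  · -- (2) → (1)
    intro h2
    rw [smallGen, Subgroup.closure_le]
    intro x hx
    have hns := h2 x hx
    set Sset := commSet x (F : Set G) with hSsetdef
    have hmemS : ∀ k ∈ F, x⁻¹ * k⁻¹ * x * k ∈ Sset := fun k hk => ⟨k, hk, rfl⟩
    have hconjS : ∀ k ∈ F, ∀ s ∈ Sset, k⁻¹ * s * k ∈ Sset := by
      intro k hk s hs
      have himg := hns k hk
      rw [← himg]
      exact ⟨s, hs, rfl⟩
    have hconjS' : ∀ k ∈ F, ∀ s ∈ Sset, k * s * k⁻¹ ∈ Sset := by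
      intro k hk s hs
      have h := hconjS k⁻¹ (inv_mem hk) s hs
      simpa using h
    have hone : (1 : G) ∈ Sset := ⟨1, F.one_mem, by group⟩
    have hmul : ∀ a ∈ Sset, ∀ b ∈ Sset, a * b ∈ Sset := by
      rintro a ⟨l, hl, rfl⟩ b hb
      have hb' : b ∈ (fun s => l⁻¹ * s * l) '' Sset := by rw [hns l hl]; exact hb
      obtain ⟨s, ⟨k, hk, rfl⟩, rfl⟩ := hb'
      exact ⟨k * l, mul_mem hk hl, by group⟩
    have hinv : ∀ a ∈ Sset, a⁻¹ ∈ Sset := by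
      rintro a ⟨l, hl, rfl⟩
      have h1 : x⁻¹ * (l⁻¹)⁻¹ * x * l⁻¹ ∈ Sset := hmemS l⁻¹ (inv_mem hl)
      have h2 := hconjS l hl _ h1
      have heq : l⁻¹ * (x⁻¹ * (l⁻¹)⁻¹ * x * l⁻¹) * l = (x⁻¹ * l⁻¹ * x * l)⁻¹ := by group
      rwa [heq] at h2
    set S : Subgroup G :=
      { carrier := Sset
        one_mem' := hone
        mul_mem' := fun ha hb => hmul _ ha _ hb
        inv_mem' := fun ha => hinv _ ha } with hSdef
    have hSmem : ∀ w, w ∈ S ↔ w ∈ Sset := fun w => Iff.rfl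
    have hSF : S ≤ F := by
      rintro a ⟨k, hk, rfl⟩
      have h1 : x⁻¹ * k⁻¹ * x ∈ F := by
        have h := hFn.conj_mem k⁻¹ (inv_mem hk) x⁻¹
        simpa [mul_assoc] using h
      exact mul_mem h1 hk
    by_cases hbot : S = ⊥
    · -- x centralizes F, hence x ∈ Z(F)
      have hxC : x ∈ Subgroup.centralizer (F : Set G) := by
        rw [Subgroup.mem_centralizer_iff]
        intro k hk
        have hS1 : x⁻¹ * k⁻¹ * x * k ∈ S := hmemS k hk
        rw [hbot, Subgroup.mem_bot] at hS1
        have hxk : x * k = k * x := by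
          calc x * k = k * x * (x⁻¹ * k⁻¹ * x * k) := by group
            _ = k * x := by rw [hS1, mul_one]
        exact hxk.symm
      have hxF : x ∈ F := Stmt10Aux.centralizer_fitting_le hsolv hxC
      refine Subgroup.mem_map.mpr ⟨⟨x, hxF⟩, ?_, rfl⟩
      rw [Subgroup.mem_center_iff]
      intro g
      refine Subtype.ext ?_
      simp only [Subgroup.coe_mul]
      exact Subgroup.mem_centralizer_iff.mp hxC (g : G) g.2
    · -- contradiction with smallness
      exfalso
      have hSsubn : (S.subgroupOf F).Normal := by
        constructor
        intro a ha g
        rw [Subgroup.mem_subgroupOf] at ha ⊢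
        have h := hconjS' (g : G) g.2 (a : G) ha
        simpa [hSmem] using h
      have hSsubne : S.subgroupOf F ≠ ⊥ := by
        intro hbot2
        apply hbot
        rw [eq_bot_iff]
        intro a ha
        have haF : a ∈ F := hSF ha
        have hmem : (⟨a, haF⟩ : ↥F) ∈ S.subgroupOf F := Subgroup.mem_subgroupOf.mpr ha
        rw [hbot2, Subgroup.mem_bot] at hmem
        rw [Subgroup.mem_bot]
        exact congrArg (fun t : ↥F => (t : G)) hmem
      have hWne := Stmt10Aux.inf_center_ne_bot hFnil (S.subgroupOf F) hSsubn hSsubne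
      obtain ⟨⟨z', hz'mem⟩, hz'ne⟩ := Subgroup.ne_bot_iff_exists_ne_one.mp hWne
      have hz'S : (z' : G) ∈ S := Subgroup.mem_subgroupOf.mp (Subgroup.mem_inf.mp hz'mem).1
      have hz'c : z' ∈ Subgroup.center ↥F := (Subgroup.mem_inf.mp hz'mem).2
      set z : G := (z' : G) with hzdef
      have hzne : z ≠ 1 := by
        intro hz1
        apply hz'ne
        refine Subtype.ext ?_
        refine Subtype.ext ?_
        exact hz1
      have hzC : z ∈ Subgroup.centralizer (F : Set G) := by
        rw [Subgroup.mem_centralizer_iff]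
        intro h hh
        have hc := (Subgroup.mem_center_iff.mp hz'c) ⟨h, hh⟩
        have hc2 := congrArg (fun t : ↥F => (t : G)) hc
        simpa using hc2
      -- centralizer subgroups
      set Cx := Subgroup.centralizer ({x} : Set G) with hCxdef
      set Cz := Subgroup.centralizer ({z} : Set G) with hCzdef
      set A := Cx ⊓ Cz with hAdef
      have hFCz : F ≤ Cz := by
        intro f hf
        rw [hCzdef, Subgroup.mem_centralizer_iff]
        intro h hh
        rw [Set.mem_singleton_iff] at hh
        rw [hh]
        exact (Subgroup.mem_centralizer_iff.mp hzC f hf).symm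
      -- orbit of z under Cx lies in (S ∩ centralizer F) \ {1}
      set Wset := (S : Set G) ∩ (Subgroup.centralizer (F : Set G) : Set G) with hWdef
      have hCentn : (Subgroup.centralizer (F : Set G)).Normal := Stmt10Aux.centralizer_normal F hFn
      have hWsub : Stmt10Aux.conjOrbit Cx z ⊆ Wset \ {1} := by
        rintro g ⟨c, hc, rfl⟩
        have hxc : x * c = c * x := Subgroup.mem_centralizer_iff.mp hc x rfl
        refine ⟨⟨?_, ?_⟩, ?_⟩
        · obtain ⟨k0, hk0, hzk⟩ := hz'S
          have : c * z * c⁻¹ = x⁻¹ * (c * k0 * c⁻¹)⁻¹ * x * (c * k0 * c⁻¹) := by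
            rw [hzk]
            exact Stmt10Aux.conj_comm_elt hxc
          rw [SetLike.mem_coe, hSmem, this]
          exact hmemS (c * k0 * c⁻¹) (hFn.conj_mem k0 hk0 c)
        · exact hCentn.conj_mem z hzC c
        · intro habs
          rw [Set.mem_singleton_iff] at habs
          apply hzne
          calc z = c⁻¹ * (c * z * c⁻¹) * c := by group
            _ = 1 := by rw [habs]; group
      have h1W : (1 : G) ∈ Wset := ⟨S.one_mem, (Subgroup.centralizer (F : Set G)).one_mem⟩
      -- counting
      have horb1 := Stmt10Aux.card_conjOrbit_mul Cx z
      have horb2 := Stmt10Aux.card_conjOrbit_mul F x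
      have horbS : Stmt10Aux.conjOrbit F x = (fun s => x * s) '' Sset := by
        ext g
        constructor
        · rintro ⟨c, hc, rfl⟩
          exact ⟨x⁻¹ * (c⁻¹)⁻¹ * x * c⁻¹, hmemS c⁻¹ (inv_mem hc), by group⟩
        · rintro ⟨s, ⟨k, hk, rfl⟩, rfl⟩
          exact ⟨k⁻¹, inv_mem hk, by group⟩
      have hcardS : Nat.card S = Sset.ncard := by
        rw [← SetLike.coe_sort_coe, Nat.card_coe_set_eq]
        rfl
      have horb2card : Nat.card (Stmt10Aux.conjOrbit F x) = Nat.card S := by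
        rw [Nat.card_coe_set_eq, horbS,
          Set.ncard_image_of_injective _ (mul_right_injective x), hcardS]
      have hOle : Nat.card (Stmt10Aux.conjOrbit Cx z) ≤ Nat.card S - 1 := by
        rw [Nat.card_coe_set_eq]
        have hb1 : (Stmt10Aux.conjOrbit Cx z).ncard ≤ (Wset \ {1}).ncard :=
          Set.ncard_le_ncard hWsub (Set.toFinite _)
        have hb2 : (Wset \ {1}).ncard = Wset.ncard - 1 :=
          Set.ncard_diff_singleton_of_mem h1W
        have hb3 : Wset.ncard ≤ (S : Set G).ncard :=
          Set.ncard_le_ncard Set.inter_subset_left (Set.toFinite _)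
        have hb4 : (S : Set G).ncard = Nat.card S := by
          rw [← SetLike.coe_sort_coe, Nat.card_coe_set_eq]
        omega
      have hSpos : 0 < Nat.card S := Nat.card_pos
      have hApos : 0 < Nat.card A := Nat.card_pos
      have hFApos : 0 < Nat.card (F ⊓ A : Subgroup G) := Nat.card_pos
      -- |Cz| ≥ |A ⊔ F| ≥ |S| * |A|
      have hsupinf := Stmt10Aux.card_sup_mul_card_inf A F
      have hFAle : Nat.card (F ⊓ A : Subgroup G) ≤ Nat.card (F ⊓ Cx : Subgroup G) :=
        Subgroup.card_le_of_le (inf_le_inf_left F inf_le_left)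
      have hFcard : Nat.card S * Nat.card (F ⊓ Cx : Subgroup G) = Nat.card F := by
        rw [← horb2card]; exact horb2
      have hE1 : Nat.card S * Nat.card A ≤ Nat.card (A ⊔ F : Subgroup G) := by
        have hchain : (Nat.card S * Nat.card A) * Nat.card (F ⊓ A : Subgroup G)
            ≤ Nat.card (A ⊔ F : Subgroup G) * Nat.card (F ⊓ A : Subgroup G) := by
          calc (Nat.card S * Nat.card A) * Nat.card (F ⊓ A : Subgroup G)
              ≤ (Nat.card S * Nat.card A) * Nat.card (F ⊓ Cx : Subgroup G) :=
                Nat.mul_le_mul_left _ hFAle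
            _ = Nat.card A * (Nat.card S * Nat.card (F ⊓ Cx : Subgroup G)) := by ring
            _ = Nat.card A * Nat.card F := by rw [hFcard]
            _ = Nat.card (A ⊔ F : Subgroup G) * Nat.card (F ⊓ A : Subgroup G) := hsupinf.symm
        exact Nat.le_of_mul_le_mul_right hchain hFApos
      have hE2 : Nat.card (A ⊔ F : Subgroup G) ≤ Nat.card Cz :=
        Subgroup.card_le_of_le (sup_le inf_le_right hFCz)
      have hCxlt : Nat.card Cx < Nat.card Cz := by
        have hc1 : Nat.card Cx ≤ (Nat.card S - 1) * Nat.card A := by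
          rw [← horb1]
          exact Nat.mul_le_mul_right _ hOle
        have hc2 : (Nat.card S - 1) * Nat.card A < Nat.card S * Nat.card A :=
          (Nat.mul_lt_mul_right hApos).mpr (by omega)
        omega
      -- conclude classCard z < classCard x, contradicting smallness
      have hx1 := Stmt10Aux.classCard_mul_card_centralizer x
      have hz1 := Stmt10Aux.classCard_mul_card_centralizer z
      have hxpos := Stmt10Aux.classCard_pos x
      have hlt : classCard z < classCard x := by
        by_contra hge
        push_neg at hge
        have hb : classCard x * Nat.card Cx < classCard z * Nat.card Cz := by
          calc classCard x * Nat.card Cx < classCard x * Nat.card Cz :=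
                (Nat.mul_lt_mul_left hxpos).mpr hCxlt
            _ ≤ classCard z * Nat.card Cz := Nat.mul_le_mul_right _ hge
        rw [hx1, hz1] at hb
        exact lt_irrefl _ hb
      exact Stmt10Aux.small_no_smaller hz hx hzne hlt
end
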